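/- arXiv:1602.00042 — 2 statements merged into one kernel-verified Lean document; each statement's English description precedes it below -/
import Mathlib

section
/- Let L>0, Ω=(0,L)×(-1,1), and κ>0. Let w=(w₁,w₂) be a smooth Ω-periodic, divergence-free, symmetric vector field and let ξ be a smooth Ω-periodic scalar function. Then |∫_Ω w₂(x) Δξ(x) dx| ≤ (κ/20)‖Δξ‖² + (5/κ)‖∇w₁‖². -/
open MeasureTheory Real Filter

noncomputable section

/-- First partial derivative. -/
def d1 (f : ℝ × ℝ → ℝ) (p : ℝ × ℝ) : ℝ := fderiv ℝ f p (1, 0)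

/-- Second partial derivative. -/
def d2 (f : ℝ × ℝ → ℝ) (p : ℝ × ℝ) : ℝ := fderiv ℝ f p (0, 1)

/-- Laplacian. -/
def lap (f : ℝ × ℝ → ℝ) (p : ℝ × ℝ) : ℝ := d1 (d1 f) p + d2 (d2 f) p

/-- The domain Ω = (0,L) × (-1,1). -/
def Omg (L : ℝ) : Set (ℝ × ℝ) := Set.Ioo 0 L ×ˢ Set.Ioo (-1) 1

/-- Squared L² norm over Ω. -/
def nrmSq (L : ℝ) (f : ℝ × ℝ → ℝ) : ℝ := ∫ p in Omg L, (f p) ^ 2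

/-- L² norm over Ω. -/
def nrm (L : ℝ) (f : ℝ × ℝ → ℝ) : ℝ := Real.sqrt (nrmSq L f)

/-- Squared L² norm of the gradient over Ω. -/
def gradNrmSq (L : ℝ) (f : ℝ × ℝ → ℝ) : ℝ := ∫ p in Omg L, ((d1 f p) ^ 2 + (d2 f p) ^ 2)

/-- L² norm of the gradient over Ω. -/
def gradNrm (L : ℝ) (f : ℝ × ℝ → ℝ) : ℝ := Real.sqrt (gradNrmSq L f)

/-- Squared L² norm of the Laplacian over Ω. -/
def lapNrmSq (L : ℝ) (f : ℝ × ℝ → ℝ) : ℝ := ∫ p in Omg L, (lap f p) ^ 2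

/-- L² norm of the Laplacian over Ω. -/
def lapNrm (L : ℝ) (f : ℝ × ℝ → ℝ) : ℝ := Real.sqrt (lapNrmSq L f)

/-- Ω-periodic: L-periodic in x₁ and 2-periodic in x₂. -/
def OmgPeriodic (L : ℝ) (f : ℝ × ℝ → ℝ) : Prop :=
  (∀ x y : ℝ, f (x + L, y) = f (x, y)) ∧ (∀ x y : ℝ, f (x, y + 2) = f (x, y))

/-- Divergence-free vector field. -/
def DivFree (u₁ u₂ : ℝ × ℝ → ℝ) : Prop := ∀ p, d1 u₁ p + d2 u₂ p = 0

/-- Symmetric vector field: first component even in x₂, second odd in x₂. -/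
def Symm (u₁ u₂ : ℝ × ℝ → ℝ) : Prop :=
  (∀ x y : ℝ, u₁ (x, -y) = u₁ (x, y)) ∧ (∀ x y : ℝ, u₂ (x, -y) = -u₂ (x, y))


set_option maxHeartbeats 1000000

open intervalIntegral in
lemma contDiff_d1 {f : ℝ × ℝ → ℝ} (hf : ContDiff ℝ (⊤ : ℕ∞) f) : ContDiff ℝ (⊤ : ℕ∞) (d1 f) :=
  (hf.fderiv_right (by simp)).clm_apply contDiff_const
lemma contDiff_d2 {f : ℝ × ℝ → ℝ} (hf : ContDiff ℝ (⊤ : ℕ∞) f) : ContDiff ℝ (⊤ : ℕ∞) (d2 f) :=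
  (hf.fderiv_right (by simp)).clm_apply contDiff_const
lemma cont_lap {f : ℝ × ℝ → ℝ} (hf : ContDiff ℝ (⊤ : ℕ∞) f) : Continuous (lap f) := by
  unfold lap
  exact ((contDiff_d1 (contDiff_d1 hf)).continuous).add ((contDiff_d2 (contDiff_d2 hf)).continuous)

lemma intOn_Omg {L : ℝ} {f : ℝ × ℝ → ℝ} (hf : Continuous f) : IntegrableOn f (Omg L) := by
  have h1 : IntegrableOn f (Set.Icc 0 L ×ˢ Set.Icc (-1) 1) :=
    hf.continuousOn.integrableOn_compact (isCompact_Icc.prod isCompact_Icc)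
  exact h1.mono_set (Set.prod_mono Set.Ioo_subset_Icc_self Set.Ioo_subset_Icc_self)

lemma ftc_slice {w : ℝ × ℝ → ℝ} (hw : ContDiff ℝ (⊤ : ℕ∞) w) (x y : ℝ) :
    w (x, y) - w (x, 0) = ∫ t in (0:ℝ)..y, d2 w (x, t) := by
  have hcont : Continuous (d2 w) := (contDiff_d2 hw).continuous
  have key : ∀ t : ℝ, HasDerivAt (fun s => w (x, s)) (d2 w (x, t)) t := by
    intro t
    have h1 : HasFDerivAt w (fderiv ℝ w (x, t)) (x, t) :=
      (hw.differentiable (by simp) (x, t)).hasFDerivAt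
    have h2 : HasDerivAt (fun s : ℝ => ((x, s) : ℝ × ℝ)) ((0 : ℝ), (1 : ℝ)) t :=
      (hasDerivAt_const t x).prodMk (hasDerivAt_id t)
    exact h1.comp_hasDerivAt t h2
  have hint : IntervalIntegrable (fun t => d2 w (x, t)) volume 0 y :=
    (hcont.comp (by continuity)).intervalIntegrable 0 y
  rw [intervalIntegral.integral_eq_sub_of_hasDerivAt (fun t _ => key t) hint]

lemma cont_ion {g : ℝ → ℝ} (hg : Continuous g) {s : Set ℝ} {a b : ℝ} (hs : s ⊆ Set.Icc a b) :
    IntegrableOn g s := by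
  exact (hg.continuousOn.integrableOn_compact isCompact_Icc).mono_set hs

lemma young_opt {A m I : ℝ} (hA : 0 ≤ A) (hm : 0 ≤ m) (hI : 0 ≤ I)
    (h : ∀ l : ℝ, 0 < l → A ≤ m / (2 * l) + l * I / 2) : A ^ 2 ≤ m * I := by
  rcases eq_or_lt_of_le hI with hI0 | hIpos
  · have hA0 : A ≤ 0 := by
      refine le_of_forall_pos_le_add fun ε hε => ?_
      rcases eq_or_lt_of_le hm with hm0 | hmpos
      · have := h 1 one_pos; rw [← hI0, ← hm0] at this
        simp at this; linarith
      · have h4 := h (m / (2 * ε)) (by positivity)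
        rw [← hI0] at h4
        have e : m / (2 * (m / (2 * ε))) = ε := by field_simp
        rw [e] at h4; linarith
    have : A = 0 := le_antisymm hA0 hA
    simp [this, ← hI0]
  · rcases eq_or_lt_of_le hm with hm0 | hmpos
    · have hA0 : A ≤ 0 := by
        refine le_of_forall_pos_le_add fun ε hε => ?_
        have h4 := h (2 * ε / I) (by positivity)
        rw [← hm0] at h4
        have e : (2 * ε / I) * I / 2 = ε := by field_simp
        rw [e] at h4; simp at h4 ⊢; linarith
      have : A = 0 := le_antisymm hA0 hA
      simp [this, ← hm0]
    · set a := Real.sqrt m with ha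
      set b := Real.sqrt I with hb
      have ha2 : a ^ 2 = m := Real.sq_sqrt hm
      have hb2 : b ^ 2 = I := Real.sq_sqrt hI
      have hap : 0 < a := Real.sqrt_pos.mpr hmpos
      have hbp : 0 < b := Real.sqrt_pos.mpr hIpos
      have h4 := h (a / b) (by positivity)
      have hab : A ≤ a * b := by
        have e1 : m / (2 * (a / b)) = a * b / 2 := by
          rw [← ha2]; field_simp
        have e2 : (a / b) * I / 2 = a * b / 2 := by
          rw [← hb2]; field_simp
        rw [e1, e2] at h4; linarith
      calc A ^ 2 ≤ (a * b) ^ 2 := by nlinarith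
      _ = m * I := by rw [mul_pow, ha2, hb2]

lemma interval_cs {g : ℝ → ℝ} (hg : Continuous g) {y : ℝ} (hy : y ∈ Set.Ioo (-1 : ℝ) 1) :
    (∫ t in (0:ℝ)..y, g t) ^ 2 ≤ |y| * ∫ t in Set.Ioo (-1:ℝ) 1, (g t) ^ 2 := by
  set I := ∫ t in Set.Ioo (-1:ℝ) 1, (g t) ^ 2 with hIdef
  have hI : 0 ≤ I := setIntegral_nonneg measurableSet_Ioo fun t _ => sq_nonneg _
  have hsub : Set.uIoc 0 y ⊆ Set.Ioo (-1:ℝ) 1 := by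
    intro t ht
    rw [Set.mem_uIoc] at ht
    constructor
    · rcases ht with h | h
      · linarith [h.1]
      · linarith [h.1, hy.1]
    · rcases ht with h | h
      · linarith [h.2, hy.2]
      · linarith [h.2]
  have hsub' : Set.uIoc 0 y ⊆ Set.Icc (-1:ℝ) 1 := hsub.trans Set.Ioo_subset_Icc_self
  have hvol : (volume (Set.uIoc 0 y)).toReal = |y| := by
    rw [Set.uIoc, Real.volume_Ioc]
    rw [ENNReal.toReal_ofReal (by simp [sub_nonneg, min_le_max])]
    rw [max_sub_min_eq_abs]
    simp
  have hIuIoc : ∫ t in Set.uIoc 0 y, (g t) ^ 2 ≤ I := by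
    refine setIntegral_mono_set (cont_ion (hg.pow 2) Set.Ioo_subset_Icc_self) ?_
      (HasSubset.Subset.eventuallyLE hsub)
    filter_upwards with t using sq_nonneg _
  have key : ∀ l : ℝ, 0 < l →
      |∫ t in (0:ℝ)..y, g t| ≤ |y| / (2 * l) + l * I / 2 := by
    intro l hl
    have h1 : |∫ t in (0:ℝ)..y, g t| ≤ ∫ t in Set.uIoc 0 y, |g t| := by
      simpa [Real.norm_eq_abs] using
        intervalIntegral.norm_integral_le_integral_norm_uIoc (f := g) (a := 0) (b := y) (μ := volume)
    have h2 : ∫ t in Set.uIoc 0 y, |g t| ≤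
        ∫ t in Set.uIoc 0 y, (1 / (2 * l) + l / 2 * (g t) ^ 2) := by
      refine setIntegral_mono_on (cont_ion hg.abs hsub') ?_ measurableSet_uIoc fun t _ => ?_
      · exact cont_ion (continuous_const.add (continuous_const.mul (hg.pow 2))) hsub'
      · have hh : 2 * l * |g t| ≤ 1 + l ^ 2 * (g t) ^ 2 := by
          nlinarith [sq_nonneg (l * |g t| - 1), sq_abs (g t)]
        calc |g t| = (2 * l * |g t|) / (2 * l) := by field_simp
        _ ≤ (1 + l ^ 2 * (g t) ^ 2) / (2 * l) := by gcongr
        _ = 1 / (2 * l) + l / 2 * (g t) ^ 2 := by field_simp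
    have hmeasfin : volume (Set.uIoc 0 y) < ⊤ := by
      rw [Set.uIoc]; exact measure_Ioc_lt_top
    have h3 : ∫ t in Set.uIoc 0 y, (1 / (2 * l) + l / 2 * (g t) ^ 2)
        = (volume (Set.uIoc 0 y)).toReal * (1 / (2*l)) + l / 2 * ∫ t in Set.uIoc 0 y, (g t)^2 := by
      rw [integral_add (integrableOn_const (C := (1 / (2 * l) : ℝ)) hmeasfin.ne)
        ((cont_ion (g := fun t => (g t) ^ 2) (hg.pow 2) hsub').const_mul _), MeasureTheory.setIntegral_const,
        MeasureTheory.integral_const_mul, smul_eq_mul, measureReal_def]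
    calc |∫ t in (0:ℝ)..y, g t| ≤ _ := h1
    _ ≤ _ := h2
    _ = _ := h3
    _ ≤ |y| * (1 / (2*l)) + l / 2 * I := by rw [hvol]; gcongr
    _ = |y| / (2 * l) + l * I / 2 := by ring
  have hfin := young_opt (abs_nonneg _) (abs_nonneg y) hI key
  calc (∫ t in (0:ℝ)..y, g t) ^ 2 = |∫ t in (0:ℝ)..y, g t| ^ 2 := (sq_abs _).symm
  _ ≤ |y| * I := hfin

lemma abs_int : ∫ y in Set.Ioo (-1:ℝ) 1, |y| = 1 := by
  rw [← MeasureTheory.integral_Ioc_eq_integral_Ioo,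
    ← intervalIntegral.integral_of_le (by norm_num : (-1:ℝ) ≤ 1)]
  have h1 : IntervalIntegrable (fun y : ℝ => |y|) volume (-1) 0 :=
    continuous_abs.intervalIntegrable _ _
  have h2 : IntervalIntegrable (fun y : ℝ => |y|) volume 0 1 :=
    continuous_abs.intervalIntegrable _ _
  rw [← intervalIntegral.integral_add_adjacent_intervals h1 h2]
  have e1 : ∫ y in (-1:ℝ)..0, |y| = ∫ y in (-1:ℝ)..0, -y := by
    apply intervalIntegral.integral_congr
    intro t ht
    rw [Set.uIcc_of_le (by norm_num : (-1:ℝ) ≤ 0)] at ht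
    exact abs_of_nonpos ht.2
  have e2 : ∫ y in (0:ℝ)..1, |y| = ∫ y in (0:ℝ)..1, y := by
    apply intervalIntegral.integral_congr
    intro t ht
    rw [Set.uIcc_of_le (by norm_num : (0:ℝ) ≤ 1)] at ht
    exact abs_of_nonneg ht.1
  rw [e1, e2, intervalIntegral.integral_neg, integral_id, integral_id]
  norm_num

lemma slice_bound {w₁ w₂ : ℝ × ℝ → ℝ} (hw₁ : ContDiff ℝ (⊤ : ℕ∞) w₁)
    (hw₂ : ContDiff ℝ (⊤ : ℕ∞) w₂) (hdiv : DivFree w₁ w₂)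
    (hodd : ∀ x y : ℝ, w₂ (x, -y) = -w₂ (x, y)) (x : ℝ) :
    ∫ y in Set.Ioo (-1:ℝ) 1, (w₂ (x, y)) ^ 2 ≤ ∫ t in Set.Ioo (-1:ℝ) 1, (d1 w₁ (x, t)) ^ 2 := by
  set g : ℝ → ℝ := fun t => d1 w₁ (x, t) with hgdef
  have hg : Continuous g := (contDiff_d1 hw₁).continuous.comp (by continuity)
  set I := ∫ t in Set.Ioo (-1:ℝ) 1, (g t) ^ 2 with hIdef
  have hI : 0 ≤ I := setIntegral_nonneg measurableSet_Ioo fun t _ => sq_nonneg _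
  have h0 : w₂ (x, 0) = 0 := by
    have := hodd x 0; rw [neg_zero] at this; linarith
  have hrep : ∀ y : ℝ, w₂ (x, y) = ∫ t in (0:ℝ)..y, -(g t) := by
    intro y
    have h := ftc_slice hw₂ x y
    rw [h0, sub_zero] at h
    rw [h]
    apply intervalIntegral.integral_congr
    intro t _
    have hd := hdiv (x, t)
    simp only [hgdef]
    linarith
  have hpt : ∀ y ∈ Set.Ioo (-1:ℝ) 1, (w₂ (x, y)) ^ 2 ≤ |y| * I := by
    intro y hy
    rw [hrep y]
    have := interval_cs (g := fun t => -(g t)) hg.neg hy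
    simpa [neg_sq] using this
  have hw₂c : Continuous fun y : ℝ => (w₂ (x, y)) ^ 2 :=
    ((hw₂.continuous).comp (by continuity)).pow 2
  calc ∫ y in Set.Ioo (-1:ℝ) 1, (w₂ (x, y)) ^ 2
      ≤ ∫ y in Set.Ioo (-1:ℝ) 1, |y| * I := by
        refine setIntegral_mono_on (cont_ion hw₂c Set.Ioo_subset_Icc_self) ?_
          measurableSet_Ioo hpt
        exact cont_ion (continuous_abs.mul continuous_const) Set.Ioo_subset_Icc_self
  _ = (∫ y in Set.Ioo (-1:ℝ) 1, |y|) * I := MeasureTheory.integral_mul_const I _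
  _ = I := by rw [abs_int, one_mul]

lemma fubini_omg {L : ℝ} {f : ℝ × ℝ → ℝ} (hf : Continuous f) :
    ∫ p in Omg L, f p = ∫ x in Set.Ioo 0 L, ∫ y in Set.Ioo (-1:ℝ) 1, f (x, y) := by
  rw [Omg, Measure.volume_eq_prod]
  exact setIntegral_prod f (by rw [← Measure.volume_eq_prod]; exact intOn_Omg hf)

lemma int_slice {L : ℝ} {f : ℝ × ℝ → ℝ} (hf : Continuous f) :
    IntegrableOn (fun x => ∫ y in Set.Ioo (-1:ℝ) 1, f (x, y)) (Set.Ioo 0 L) := by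
  have h : Integrable f ((volume.restrict (Set.Ioo 0 L)).prod
      (volume.restrict (Set.Ioo (-1:ℝ) 1))) := by
    rw [Measure.prod_restrict, ← Measure.volume_eq_prod]; exact intOn_Omg hf
  exact h.integral_prod_left

/-- estimate (3.22) of the paper:
`|∫_Ω w₂ Δξ| ≤ (κ/20)‖Δξ‖² + (5/κ)‖∇w₁‖²`. -/
theorem vertical_laplacian_estimate (L : ℝ) (hL : 0 < L) (κ : ℝ) (hκ : 0 < κ)
    (w₁ w₂ ξ : ℝ × ℝ → ℝ)
    (hw₁ : ContDiff ℝ (⊤ : ℕ∞) w₁) (hw₂ : ContDiff ℝ (⊤ : ℕ∞) w₂) (hξ : ContDiff ℝ (⊤ : ℕ∞) ξ)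
    (hpw₁ : OmgPeriodic L w₁) (hpw₂ : OmgPeriodic L w₂) (hpξ : OmgPeriodic L ξ)
    (hdiv : DivFree w₁ w₂) (hsym : Symm w₁ w₂) :
    |∫ p in Omg L, w₂ p * lap ξ p| ≤
      κ / 20 * lapNrmSq L ξ + 5 / κ * gradNrmSq L w₁ := by
  have hlapc : Continuous (lap ξ) := cont_lap hξ
  have hw₂c : Continuous w₂ := hw₂.continuous
  have hd1c : Continuous (d1 w₁) := (contDiff_d1 hw₁).continuous
  have hd2c : Continuous (d2 w₁) := (contDiff_d2 hw₁).continuous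
  have hmeas : MeasurableSet (Omg L) := measurableSet_Ioo.prod measurableSet_Ioo
  -- step 1 : |∫| ≤ ∫ abs
  have step1 : |∫ p in Omg L, w₂ p * lap ξ p| ≤ ∫ p in Omg L, |w₂ p * lap ξ p| := by
    have h := MeasureTheory.norm_integral_le_integral_norm (f := fun p => w₂ p * lap ξ p)
      (μ := volume.restrict (Omg L))
    simp only [Real.norm_eq_abs] at h
    exact h
  -- step 2 : pointwise Young
  have step2 : ∫ p in Omg L, |w₂ p * lap ξ p| ≤
      ∫ p in Omg L, (κ / 20 * (lap ξ p) ^ 2 + 5 / κ * (w₂ p) ^ 2) := by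
    refine setIntegral_mono_on (intOn_Omg (hw₂c.mul hlapc).abs) ?_ hmeas fun p _ => ?_
    · exact intOn_Omg ((continuous_const.mul (hlapc.pow 2)).add
        (continuous_const.mul (hw₂c.pow 2)))
    · rw [abs_mul]
      have h1 : κ * (|w₂ p| * |lap ξ p|) ≤ κ ^ 2 / 20 * (lap ξ p) ^ 2 + 5 * (w₂ p) ^ 2 := by
        nlinarith [sq_nonneg (κ * |lap ξ p| / 10 - |w₂ p|), sq_abs (lap ξ p), sq_abs (w₂ p)]
      calc |w₂ p| * |lap ξ p| = κ * (|w₂ p| * |lap ξ p|) / κ := by field_simp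
      _ ≤ (κ ^ 2 / 20 * (lap ξ p) ^ 2 + 5 * (w₂ p) ^ 2) / κ := by gcongr
      _ = κ / 20 * (lap ξ p) ^ 2 + 5 / κ * (w₂ p) ^ 2 := by field_simp
  -- step 3 : split integral
  have step3 : ∫ p in Omg L, (κ / 20 * (lap ξ p) ^ 2 + 5 / κ * (w₂ p) ^ 2)
      = κ / 20 * lapNrmSq L ξ + 5 / κ * nrmSq L w₂ := by
    rw [integral_add ((intOn_Omg (f := fun p => (lap ξ p) ^ 2) (hlapc.pow 2)).const_mul _)
      ((intOn_Omg (f := fun p => (w₂ p) ^ 2) (hw₂c.pow 2)).const_mul _), MeasureTheory.integral_const_mul,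
      MeasureTheory.integral_const_mul]
    simp only [lapNrmSq, nrmSq]
  -- step 4 : nrmSq w₂ ≤ ∫ (d1 w₁)²
  have step4 : nrmSq L w₂ ≤ ∫ p in Omg L, (d1 w₁ p) ^ 2 := by
    have e1 := fubini_omg (L := L) (f := fun p => (w₂ p) ^ 2) (hw₂c.pow 2)
    have e2 := fubini_omg (L := L) (f := fun p => (d1 w₁ p) ^ 2) (hd1c.pow 2)
    have h1 := int_slice (L := L) (f := fun p => (w₂ p) ^ 2) (hw₂c.pow 2)
    have h2 := int_slice (L := L) (f := fun p => (d1 w₁ p) ^ 2) (hd1c.pow 2)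
    rw [nrmSq, e1, e2]
    exact integral_mono h1 h2 fun x => slice_bound hw₁ hw₂ hdiv hsym.2 x
  -- step 5 : ∫ (d1 w₁)² ≤ gradNrmSq
  have step5 : ∫ p in Omg L, (d1 w₁ p) ^ 2 ≤ gradNrmSq L w₁ := by
    refine setIntegral_mono_on (intOn_Omg (hd1c.pow 2)) ?_ hmeas fun p _ => by nlinarith [sq_nonneg (d2 w₁ p)]
    exact intOn_Omg ((hd1c.pow 2).add (hd2c.pow 2))
  have h5κ : (0:ℝ) < 5 / κ := by positivity
  have : 5 / κ * nrmSq L w₂ ≤ 5 / κ * gradNrmSq L w₁ := by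
    apply mul_le_mul_of_nonneg_left (step4.trans step5) h5κ.le
  linarith
end
end

section
/- Let L>0, Ω=(0,L)×(-1,1), and let μ,ν,c₀,h>0 satisfy 2μc₀²h² ≤ ν/16 and μ ≥ 2ν. Let w₁ be a smooth Ω-periodic scalar function and let J be a square-integrable function on Ω satisfying the second-order approximation bound ‖J - w₁‖ ≤ c₀h(‖w₁‖² + ‖∇w₁‖²)^{1/2} + c₀²h²(‖w₁‖² + ‖∇w₁‖² + 2‖Δw₁‖²)^{1/2}. Then -μ∫_Ω J(x) w₁(x) dx ≤ (ν/4)‖∇w₁‖² - (3μ/4)‖w₁‖² + (ν/128)‖Δw₁‖². -/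
open MeasureTheory Real Filter

noncomputable section

/-- Cauchy–Schwarz for real-valued L² functions. -/
lemma cs_int_aux {α : Type*} [MeasurableSpace α] {μ : Measure α} {f g : α → ℝ}
    (hf : MemLp f 2 μ) (hg : MemLp g 2 μ) :
    ∫ x, f x * g x ∂μ ≤ Real.sqrt (∫ x, f x ^ 2 ∂μ) * Real.sqrt (∫ x, g x ^ 2 ∂μ) := by
  set F := hf.toLp f
  set G := hg.toLp g
  have hFf : (F : α → ℝ) =ᵐ[μ] f := hf.coeFn_toLp
  have hGg : (G : α → ℝ) =ᵐ[μ] g := hg.coeFn_toLp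
  have h1 : ∫ x, f x * g x ∂μ = @inner ℝ _ _ F G := by
    rw [MeasureTheory.L2.inner_def]
    refine integral_congr_ae ?_
    filter_upwards [hFf, hGg] with x hx hy
    simp [hx, hy, RCLike.inner_apply, mul_comm]
  have h2 : ∫ x, f x ^ 2 ∂μ = ‖F‖ ^ 2 := by
    rw [← real_inner_self_eq_norm_sq, MeasureTheory.L2.inner_def]
    refine integral_congr_ae ?_
    filter_upwards [hFf] with x hx
    simp [hx, RCLike.inner_apply, sq]
  have h3 : ∫ x, g x ^ 2 ∂μ = ‖G‖ ^ 2 := by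
    rw [← real_inner_self_eq_norm_sq, MeasureTheory.L2.inner_def]
    refine integral_congr_ae ?_
    filter_upwards [hGg] with x hx
    simp [hx, RCLike.inner_apply, sq]
  rw [h1, h2, h3, Real.sqrt_sq (norm_nonneg _), Real.sqrt_sq (norm_nonneg _)]
  exact real_inner_le_norm F G

lemma finite_omg_aux (L : ℝ) : IsFiniteMeasure (volume.restrict (Omg L)) := by
  constructor
  rw [Measure.restrict_apply_univ]
  have hsub : Omg L ⊆ Set.Icc 0 L ×ˢ Set.Icc (-1 : ℝ) 1 :=
    Set.prod_mono Set.Ioo_subset_Icc_self Set.Ioo_subset_Icc_self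
  exact lt_of_le_of_lt (measure_mono hsub)
    ((isCompact_Icc.prod isCompact_Icc).measure_lt_top)

lemma memL2_of_cont_aux (L : ℝ) {f : ℝ × ℝ → ℝ} (hf : Continuous f) :
    MemLp f 2 (volume.restrict (Omg L)) := by
  have := finite_omg_aux L
  obtain ⟨C, hC⟩ := ((isCompact_Icc.prod isCompact_Icc :
    IsCompact (Set.Icc 0 L ×ˢ Set.Icc (-1 : ℝ) 1))).exists_bound_of_continuousOn
    hf.continuousOn
  refine MemLp.of_bound hf.aestronglyMeasurable C ?_
  refine ae_restrict_of_forall_mem ((measurableSet_Ioo).prod measurableSet_Ioo) ?_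
  intro x hx
  exact hC x (Set.prod_mono Set.Ioo_subset_Icc_self Set.Ioo_subset_Icc_self hx)


/-- The purely arithmetic part of the estimate. -/
lemma arith_aux (μ ν c₀ h N G P A I : ℝ) (hμ : 0 < μ) (hν : 0 < ν) (hc₀ : 0 ≤ c₀) (hh : 0 ≤ h)
    (hcond : 2 * μ * (c₀ ^ 2 * h ^ 2) ≤ ν / 16) (hμν : 2 * ν ≤ μ)
    (hN : 0 ≤ N) (hG : 0 ≤ G) (hP : 0 ≤ P) (hA : 0 ≤ A) (he : 0 ≤ c₀ ^ 2 * h ^ 2)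
    (happ : A ≤ c₀ * h * Real.sqrt (N + G) + c₀ ^ 2 * h ^ 2 * Real.sqrt (N + G + 2 * P))
    (hcs : -I ≤ A * Real.sqrt N) :
    -μ * (I + N) ≤ ν / 4 * G - 3 * μ / 4 * N + ν / 128 * P := by
  set e := c₀ ^ 2 * h ^ 2 with hedef
  set W := Real.sqrt N with hWdef
  set X := c₀ * h * Real.sqrt (N + G) with hXdef
  set Y := e * Real.sqrt (N + G + 2 * P) with hYdef
  have hW : 0 ≤ W := Real.sqrt_nonneg _
  have hWsq : W ^ 2 = N := Real.sq_sqrt hN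
  have hX : 0 ≤ X := by rw [hXdef]; positivity
  have hY : 0 ≤ Y := by rw [hYdef, hedef]; positivity
  have hX2 : X ^ 2 = e * (N + G) := by
    rw [hXdef, hedef, mul_pow, mul_pow, Real.sq_sqrt (by linarith : (0:ℝ) ≤ N + G)]
  have hY2 : Y ^ 2 = e ^ 2 * (N + G + 2 * P) := by
    rw [hYdef, mul_pow, Real.sq_sqrt (by linarith : (0:ℝ) ≤ N + G + 2 * P)]
  clear_value e W X Y
  -- A² ≤ 2e(N+G) + 2e²(N+G+2P)
  have hA2b : A ^ 2 ≤ 2 * e * (N + G) + 2 * e ^ 2 * (N + G + 2 * P) := by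
    have h1 : A * A ≤ (X + Y) * (X + Y) := mul_self_le_mul_self hA happ
    have e1 : (X + Y) * (X + Y) = X ^ 2 + 2 * (X * Y) + Y ^ 2 := by ring
    have e2 : (X - Y) ^ 2 = X ^ 2 - 2 * (X * Y) + Y ^ 2 := by ring
    have e3 : A ^ 2 = A * A := by ring
    linarith [h1, sq_nonneg (X - Y), e1, e2, e3, hX2, hY2]
  -- e ≤ 1/64
  have h2νe : 2 * ν * e ≤ μ * e := mul_le_mul_of_nonneg_right hμν he
  have he64 : e ≤ 1 / 64 := by
    have h2 : ν * (2 * e) ≤ ν * (1 / 32) := by linarith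
    have := (mul_le_mul_iff_right₀ hν).mp h2
    linarith
  have h4e : 4 * μ * e ≤ ν / 8 := by linarith
  have h4e2 : 4 * μ * e ^ 2 ≤ ν / 512 := by
    have h1 : (2 * e) * (2 * μ * e) ≤ (2 * e) * (ν / 16) :=
      mul_le_mul_of_nonneg_left (by linarith) (by linarith)
    have h2 : e * ν ≤ (1 / 64) * ν := mul_le_mul_of_nonneg_right he64 hν.le
    have r1 : (2 * e) * (2 * μ * e) = 4 * μ * e ^ 2 := by ring
    have r2 : (2 * e) * (ν / 16) = e * ν / 8 := by ring
    linarith [h1, h2, r1, r2]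
  -- A·W ≤ W²/8 + 2A²
  have hAW : A * W ≤ W ^ 2 / 8 + 2 * A ^ 2 := by
    have hexp : (W - 4 * A) ^ 2 = W ^ 2 - 8 * (A * W) + 16 * A ^ 2 := by ring
    linarith [sq_nonneg (W - 4 * A), hexp]
  -- 2μA² bound
  have h2muA : 2 * μ * A ^ 2 ≤ ν / 8 * (N + G) + ν / 512 * (N + G + 2 * P) := by
    have h1 : 2 * μ * A ^ 2 ≤ 2 * μ * (2 * e * (N + G) + 2 * e ^ 2 * (N + G + 2 * P)) :=
      mul_le_mul_of_nonneg_left hA2b (by linarith)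
    have m1 : (4 * μ * e) * (N + G) ≤ (ν / 8) * (N + G) :=
      mul_le_mul_of_nonneg_right h4e (by linarith)
    have m2 : (4 * μ * e ^ 2) * (N + G + 2 * P) ≤ (ν / 512) * (N + G + 2 * P) :=
      mul_le_mul_of_nonneg_right h4e2 (by linarith)
    have hr : 2 * μ * (2 * e * (N + G) + 2 * e ^ 2 * (N + G + 2 * P))
        = (4 * μ * e) * (N + G) + (4 * μ * e ^ 2) * (N + G + 2 * P) := by ring
    linarith [h1, m1, m2, hr]
  have hfin : -μ * (I + N) ≤ μ * (A * W) - μ * N := by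
    have := mul_le_mul_of_nonneg_left hcs hμ.le
    linarith [this]
  have hstep : μ * (A * W) ≤ μ * (W ^ 2 / 8 + 2 * A ^ 2) :=
    mul_le_mul_of_nonneg_left hAW hμ.le
  have hμW : μ * W ^ 2 = μ * N := by rw [hWsq]
  linarith [hstep, hfin, h2muA, hμW,
    mul_nonneg hν.le hG, mul_nonneg hν.le hP,
    mul_nonneg (show (0:ℝ) ≤ μ / 8 - 65 / 512 * ν by linarith) hN]

/-- estimate (3.35) of the paper for a second-order interpolant `J = I_h(w₁)`:
`-μ(I_h(w₁), w₁) ≤ (ν/4)‖∇w₁‖² - (3μ/4)‖w₁‖² + (ν/128)‖Δw₁‖²`. -/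
theorem feedback_estimate_L2_second_order (L : ℝ) (hL : 0 < L) (μ ν c₀ h : ℝ)
    (hμ : 0 < μ) (hν : 0 < ν) (hc₀ : 0 < c₀) (hh : 0 < h)
    (hcond : 2 * μ * c₀ ^ 2 * h ^ 2 ≤ ν / 16) (hμν : 2 * ν ≤ μ)
    (w₁ J : ℝ × ℝ → ℝ) (hw₁ : ContDiff ℝ (⊤ : ℕ∞) w₁) (hpw₁ : OmgPeriodic L w₁)
    (hJ : MemLp J 2 (volume.restrict (Omg L)))
    (happrox : nrm L (fun p => J p - w₁ p) ≤
      c₀ * h * Real.sqrt (nrmSq L w₁ + gradNrmSq L w₁)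
        + c₀ ^ 2 * h ^ 2 * Real.sqrt (nrmSq L w₁ + gradNrmSq L w₁ + 2 * lapNrmSq L w₁)) :
    -μ * ∫ p in Omg L, J p * w₁ p ≤
      ν / 4 * gradNrmSq L w₁ - 3 * μ / 4 * nrmSq L w₁ + ν / 128 * lapNrmSq L w₁ := by
  classical
  have hw2 : MemLp w₁ 2 (volume.restrict (Omg L)) := memL2_of_cont_aux L hw₁.continuous
  have hd : MemLp (fun p => J p - w₁ p) 2 (volume.restrict (Omg L)) := hJ.sub hw2
  have hwsq : Integrable (fun p => w₁ p ^ 2) (volume.restrict (Omg L)) := hw2.integrable_sq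
  have hdsq : Integrable (fun p => (J p - w₁ p) ^ 2) (volume.restrict (Omg L)) :=
    hd.integrable_sq
  have hint : Integrable (fun p => (J p - w₁ p) * w₁ p) (volume.restrict (Omg L)) := by
    refine Integrable.mono' (hdsq.add hwsq)
      (hd.aestronglyMeasurable.mul hw2.aestronglyMeasurable) (Filter.Eventually.of_forall ?_)
    intro p
    simp only [Pi.add_apply]
    rw [Real.norm_eq_abs, abs_mul]
    nlinarith [sq_abs (J p - w₁ p), sq_abs (w₁ p), abs_nonneg (J p - w₁ p), abs_nonneg (w₁ p),
      sq_nonneg (|J p - w₁ p| - |w₁ p|)]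
  have hsplit : ∫ p in Omg L, J p * w₁ p
      = (∫ p in Omg L, (J p - w₁ p) * w₁ p) + nrmSq L w₁ := by
    show _ = _ + ∫ p in Omg L, w₁ p ^ 2
    rw [← integral_add hint hwsq]
    congr 1
    ext p
    ring
  have hN : 0 ≤ nrmSq L w₁ := integral_nonneg fun p => sq_nonneg _
  have hG : 0 ≤ gradNrmSq L w₁ := integral_nonneg fun p => by positivity
  have hP : 0 ≤ lapNrmSq L w₁ := integral_nonneg fun p => sq_nonneg _
  have hA : 0 ≤ nrm L (fun p => J p - w₁ p) := Real.sqrt_nonneg _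
  have hcs : -(∫ p in Omg L, (J p - w₁ p) * w₁ p)
      ≤ nrm L (fun p => J p - w₁ p) * Real.sqrt (nrmSq L w₁) := by
    have h0 : ∫ p in Omg L, (-(J p - w₁ p)) * w₁ p ≤
        Real.sqrt (∫ p in Omg L, (-(J p - w₁ p)) ^ 2) *
        Real.sqrt (∫ p in Omg L, w₁ p ^ 2) := cs_int_aux hd.neg hw2
    have h1 : (∫ p in Omg L, (-(J p - w₁ p)) * w₁ p)
        = -(∫ p in Omg L, (J p - w₁ p) * w₁ p) := by
      rw [← integral_neg]
      congr 1; ext p; ring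
    have h2 : (∫ p in Omg L, (-(J p - w₁ p)) ^ 2)
        = ∫ p in Omg L, (J p - w₁ p) ^ 2 := by
      congr 1; ext p; ring
    rw [h1, h2] at h0
    exact h0
  rw [hsplit]
  have hcond' : 2 * μ * (c₀ ^ 2 * h ^ 2) ≤ ν / 16 := by
    have : 2 * μ * (c₀ ^ 2 * h ^ 2) = 2 * μ * c₀ ^ 2 * h ^ 2 := by ring
    linarith [hcond, this]
  exact arith_aux μ ν c₀ h (nrmSq L w₁) (gradNrmSq L w₁) (lapNrmSq L w₁)
    (nrm L (fun p => J p - w₁ p)) (∫ p in Omg L, (J p - w₁ p) * w₁ p)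
    hμ hν hc₀.le hh.le hcond' hμν hN hG hP hA (by positivity) happrox hcs
end
end
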